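/- Let (ξ₁, ξ₂) ~ N((πβ, π)', Σ) with Σ positive definite and π > 0, and let β̂_U = τ̂(ξ₂)·(ξ₁ − (σ₁₂/σ₂²)ξ₂) + σ₁₂/σ₂² where τ̂(ξ₂) = (1/σ₂)(1 − Φ(ξ₂/σ₂))/φ(ξ₂/σ₂). Then for every ε > 0, E[|β̂_U|^{1+ε}] = +∞. -/

import Mathlib

open MeasureTheory ProbabilityTheory Filter

/-- Standard normal density `φ`. -/
noncomputable def stdPDF (x : ℝ) : ℝ :=
  (Real.sqrt (2 * Real.pi))⁻¹ * Real.exp (-(x ^ 2) / 2)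

/-- Standard normal CDF `Φ`. -/
noncomputable def stdCDF (x : ℝ) : ℝ := ∫ t in Set.Iic x, stdPDF t

/-- Mills-ratio estimator `τ̂(x, σ²) = (1/σ)(1 − Φ(x/σ))/φ(x/σ)`. -/
noncomputable def millsTau (σ x : ℝ) : ℝ :=
  (1 / σ) * (1 - stdCDF (x / σ)) / stdPDF (x / σ)

lemma stdPDF_pos (x : ℝ) : 0 < stdPDF x := by
  unfold stdPDF; positivity

lemma stdPDF_eq : stdPDF = fun x => (Real.sqrt (2 * Real.pi))⁻¹ * Real.exp (-(1/2 : ℝ) * x ^ 2) := by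
  funext x; unfold stdPDF; ring_nf

lemma integrable_stdPDF : Integrable stdPDF := by
  rw [stdPDF_eq]
  exact (integrable_exp_neg_mul_sq (by norm_num)).const_mul _

lemma integral_stdPDF : ∫ x, stdPDF x = 1 := by
  rw [stdPDF_eq]
  rw [integral_const_mul, integral_gaussian]
  have : Real.pi / (1/2) = 2 * Real.pi := by ring
  rw [this]
  exact inv_mul_cancel₀ (Real.sqrt_ne_zero'.mpr (by positivity))

lemma monotone_stdCDF : Monotone stdCDF := by
  intro a b hab
  exact setIntegral_mono_set (integrable_stdPDF.integrableOn)
    (Filter.Eventually.of_forall fun x => (stdPDF_pos x).le)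
    (HasSubset.Subset.eventuallyLE (Set.Iic_subset_Iic.mpr hab))

lemma measurable_stdCDF : Measurable stdCDF := monotone_stdCDF.measurable

lemma measurable_millsTau (σ : ℝ) : Measurable (fun x => millsTau σ x) := by
  unfold millsTau
  exact ((measurable_const.mul ((measurable_const.sub
    (measurable_stdCDF.comp (measurable_id.div_const σ))))).div
    ((stdPDF_eq ▸ (by fun_prop) : Measurable stdPDF).comp (measurable_id.div_const σ)))

noncomputable def c₀ : ℝ := ∫ t in Set.Ioc (-1 : ℝ) 0, stdPDF t

lemma c0_pos : 0 < c₀ := by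
  unfold c₀
  have h1 : ∀ x ∈ Set.Ioc (-1 : ℝ) 0, (Real.sqrt (2 * Real.pi))⁻¹ * Real.exp (-(1:ℝ)/2) ≤ stdPDF x := by
    intro x hx
    unfold stdPDF
    gcongr
    have hx2 : x ^ 2 ≤ 1 := by nlinarith [hx.1, hx.2]
    linarith
  have hv : (volume (Set.Ioc (-1:ℝ) 0)) = 1 := by rw [Real.volume_Ioc]; norm_num
  calc (0:ℝ) < (Real.sqrt (2 * Real.pi))⁻¹ * Real.exp (-(1:ℝ)/2) := by positivity
    _ = ∫ _ in Set.Ioc (-1 : ℝ) 0, ((Real.sqrt (2 * Real.pi))⁻¹ * Real.exp (-(1:ℝ)/2)) := by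
        rw [setIntegral_const, measureReal_def, hv]; simp
    _ ≤ ∫ t in Set.Ioc (-1 : ℝ) 0, stdPDF t := by
        apply setIntegral_mono_on (integrableOn_const (by rw [hv]; norm_num))
          integrable_stdPDF.integrableOn measurableSet_Ioc h1

lemma c0_le (u : ℝ) (hu : u ≤ -1) : c₀ ≤ 1 - stdCDF u := by
  have key : stdCDF u + ∫ t in Set.Ioi u, stdPDF t = 1 := by
    rw [stdCDF, intervalIntegral.integral_Iic_add_Ioi integrable_stdPDF.integrableOn
      integrable_stdPDF.integrableOn]
    exact integral_stdPDF
  have h2 : c₀ ≤ ∫ t in Set.Ioi u, stdPDF t := by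
    apply setIntegral_mono_set integrable_stdPDF.integrableOn
      (Filter.Eventually.of_forall fun x => (stdPDF_pos x).le)
    apply HasSubset.Subset.eventuallyLE
    intro x hx
    exact lt_of_le_of_lt hu hx.1
  linarith

lemma millsTau_ge (σ : ℝ) (hσ : 0 < σ) (x : ℝ) (hx : x / σ ≤ -1) :
    c₀ * Real.sqrt (2 * Real.pi) / σ * Real.exp ((x / σ) ^ 2 / 2) ≤ millsTau σ x := by
  unfold millsTau
  set u := x / σ
  have hp := stdPDF_pos u
  have hc := c0_le u hx
  rw [le_div_iff₀ hp]
  have hcalc : c₀ * Real.sqrt (2 * Real.pi) / σ * Real.exp (u ^ 2 / 2) * stdPDF u = c₀ / σ := by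
    unfold stdPDF
    have hs : Real.sqrt (2 * Real.pi) ≠ 0 := by positivity
    have he : Real.exp (u ^ 2 / 2) * Real.exp (-u ^ 2 / 2) = 1 := by
      rw [← Real.exp_add, (by ring : u ^ 2 / 2 + -u ^ 2 / 2 = (0:ℝ)), Real.exp_zero]
    field_simp
    have he' : Real.exp (u ^ 2 / 2) * Real.exp (-(u ^ 2 / 2)) = 1 := by
      rw [← Real.exp_add]; simp
    linear_combination c₀ * he'
  rw [hcalc]
  have h3 : 1 / σ * (1 - stdCDF u) = (1 - stdCDF u) / σ := by ring
  rw [h3]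
  gcongr

lemma tendsto_sq_shift (a : ℝ) : Tendsto (fun y : ℝ => (y + a) ^ 2) atBot atTop := by
  have h1 : Tendsto (fun y : ℝ => -(y + a)) atBot atTop :=
    tendsto_neg_atBot_atTop.comp (tendsto_atBot_add_const_right atBot a tendsto_id)
  have h2 := (tendsto_pow_atTop (two_ne_zero)).comp h1
  refine h2.congr fun y => ?_
  simp only [Function.comp_apply]
  ring


/-- β̂_U has infinite 1+ε absolute moment for every ε > 0. -/
theorem stmt4 {Ω : Type*} [MeasurableSpace Ω] (P : Measure Ω) [IsProbabilityMeasure P]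
    (Z₁ Z₂ : Ω → ℝ) (hm₁ : Measurable Z₁) (hm₂ : Measurable Z₂)
    (hind : IndepFun Z₁ Z₂ P)
    (hZ₁ : P.map Z₁ = gaussianReal 0 1) (hZ₂ : P.map Z₂ = gaussianReal 0 1)
    (β π σ₁ σ₁₂ σ₂ : ℝ) (hπ : 0 < π) (hσ₂ : 0 < σ₂)
    (hpd : σ₁₂ ^ 2 < σ₁ ^ 2 * σ₂ ^ 2)
    (ξ₁ ξ₂ : Ω → ℝ)
    (hξ₂ : ξ₂ = fun ω => π + σ₂ * Z₂ ω)
    (hξ₁ : ξ₁ = fun ω => π * β + (σ₁₂ / σ₂) * Z₂ ω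
        + Real.sqrt (σ₁ ^ 2 - σ₁₂ ^ 2 / σ₂ ^ 2) * Z₁ ω)
    (ε : ℝ) (hε : 0 < ε) :
    ∫⁻ ω, ENNReal.ofReal
        (|millsTau σ₂ (ξ₂ ω) * (ξ₁ ω - (σ₁₂ / σ₂ ^ 2) * ξ₂ ω) + σ₁₂ / σ₂ ^ 2| ^ (1 + ε))
        ∂P = ⊤ := by
  have hσ₂' : σ₂ ≠ 0 := hσ₂.ne'
  set s : ℝ := Real.sqrt (σ₁ ^ 2 - σ₁₂ ^ 2 / σ₂ ^ 2) with hs_def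
  have hs2 : 0 < σ₁ ^ 2 - σ₁₂ ^ 2 / σ₂ ^ 2 := by
    rw [sub_pos, div_lt_iff₀ (by positivity)]; linarith
  have hs : 0 < s := Real.sqrt_pos.mpr hs2
  set dd : ℝ := σ₁₂ / σ₂ ^ 2 with hdd_def
  set c : ℝ := π * β - σ₁₂ * π / σ₂ ^ 2 with hc_def
  set m : ℝ := π / σ₂ with hm_def
  set K : ℝ := c₀ * Real.sqrt (2 * Real.pi) / σ₂ with hK_def
  have hK : 0 < K := by have := c0_pos; positivity
  set T : ℝ → ℝ := fun y => K * Real.exp ((y + m) ^ 2 / 2) with hT_def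
  set G : ℝ → ℝ → ENNReal := fun y x =>
    ENNReal.ofReal (|millsTau σ₂ (π + σ₂ * y) * (c + s * x) + dd| ^ (1 + ε)) with hG_def
  -- measurability
  have hGm : Measurable (fun p : ℝ × ℝ => G p.1 p.2) := by
    apply Measurable.ennreal_ofReal
    apply (Real.continuous_rpow_const (by linarith : (0:ℝ) ≤ 1 + ε)).measurable.comp
    apply Measurable.abs
    exact (((measurable_millsTau σ₂).comp
      (measurable_const.add (measurable_fst.const_mul σ₂))).mul
      (measurable_const.add (measurable_snd.const_mul s))).add_const dd
  -- Step 1: rewrite integrand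
  have hint : ∀ ω, ENNReal.ofReal
      (|millsTau σ₂ (ξ₂ ω) * (ξ₁ ω - dd * ξ₂ ω) + dd| ^ (1 + ε)) = G (Z₂ ω) (Z₁ ω) := by
    intro ω
    have h1 : ξ₁ ω - dd * ξ₂ ω = c + s * Z₁ ω := by
      simp only [hξ₁, hξ₂, hdd_def, hc_def, hs_def]
      field_simp
      ring
    rw [h1]
    simp only [hξ₂, hG_def]
  -- the inner lower bound
  set γ : Measure ℝ := gaussianReal 0 1 with hγ_def
  set A : Set ℝ := Set.Ici ((|dd| + 1 - c) / s) with hA_def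
  have hAne : γ A ≠ 0 := by
    intro h0
    have habs := gaussianReal_absolutelyContinuous' 0 (one_ne_zero) h0
    rw [Real.volume_Ici] at habs
    exact ENNReal.top_ne_zero habs
  have hinner : ∀ y : ℝ, y + m ≤ -1 → 1 ≤ T y →
      ENNReal.ofReal (T y ^ (1 + ε)) * γ A ≤ ∫⁻ x, G y x ∂γ := by
    intro y h1 h2
    have harg : (π + σ₂ * y) / σ₂ = y + m := by
      rw [hm_def]; field_simp; ring
    have hτ : T y ≤ millsTau σ₂ (π + σ₂ * y) := by
      have := millsTau_ge σ₂ hσ₂ (π + σ₂ * y) (by rw [harg]; exact h1)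
      rw [harg] at this
      exact this
    calc ENNReal.ofReal (T y ^ (1 + ε)) * γ A
        = ∫⁻ _ in A, ENNReal.ofReal (T y ^ (1 + ε)) ∂γ := by
          rw [setLIntegral_const]
      _ ≤ ∫⁻ x in A, G y x ∂γ := by
          apply setLIntegral_mono (hGm.comp (measurable_const.prodMk measurable_id))
          intro x hx
          apply ENNReal.ofReal_le_ofReal
          apply Real.rpow_le_rpow (by positivity) ?_ (by linarith)
          have hcx : |dd| + 1 ≤ c + s * x := by
            rw [hA_def, Set.mem_Ici, div_le_iff₀ hs] at hx
            nlinarith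
          set τ : ℝ := millsTau σ₂ (π + σ₂ * y)
          have hτ1 : (1:ℝ) ≤ τ := le_trans h2 hτ
          have key : T y ≤ τ * (c + s * x) + dd := by
            nlinarith [abs_nonneg dd, neg_abs_le dd]
          exact le_trans key (le_abs_self _)
      _ ≤ ∫⁻ x, G y x ∂γ := setLIntegral_le_lintegral A _
  -- tendsto facts and choice of y₂
  have hTt : Tendsto T atBot atTop := by
    rw [hT_def]
    apply Tendsto.const_mul_atTop hK
    exact Real.tendsto_exp_atTop.comp ((tendsto_sq_shift m).atTop_div_const two_pos)
  set a : ℝ := (1 + ε) * m / ε with ha_def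
  set C : ℝ := K ^ (1 + ε) * (Real.sqrt (2 * Real.pi))⁻¹ with hC_def
  set D : ℝ := (1 + ε) * m ^ 2 / 2 - ε / 2 * a ^ 2 with hD_def
  have hKp : 0 < K ^ (1 + ε) := Real.rpow_pos_of_pos hK _
  have hLrw : ∀ y, T y ^ (1 + ε) * stdPDF y = C * Real.exp (ε / 2 * (y + a) ^ 2 + D) := by
    intro y
    simp only [hT_def]
    calc (K * Real.exp ((y + m) ^ 2 / 2)) ^ (1 + ε) * stdPDF y
        = K ^ (1 + ε) * (Real.sqrt (2 * Real.pi))⁻¹ *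
          (Real.exp ((y + m) ^ 2 / 2 * (1 + ε)) * Real.exp (-(y ^ 2) / 2)) := by
          rw [Real.mul_rpow hK.le (Real.exp_nonneg _), ← Real.exp_mul]
          unfold stdPDF
          ring
      _ = C * Real.exp (ε / 2 * (y + a) ^ 2 + D) := by
          rw [← Real.exp_add, hC_def]
          congr 1
          rw [hD_def, ha_def]
          congr 1
          field_simp [hε.ne']
          ring
  have hLt : Tendsto (fun y => T y ^ (1 + ε) * stdPDF y) atBot atTop := by
    have hC : 0 < C := by rw [hC_def]; positivity
    refine Tendsto.congr (fun y => (hLrw y).symm) ?_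
    apply Tendsto.const_mul_atTop hC
    apply Real.tendsto_exp_atTop.comp
    apply tendsto_atTop_add_const_right
    exact (tendsto_sq_shift a).const_mul_atTop (by positivity : (0:ℝ) < ε / 2)
  have hev : ∀ᶠ y in atBot, (y + m ≤ -1 ∧ 1 ≤ T y ∧ 1 ≤ T y ^ (1 + ε) * stdPDF y) :=
    ((eventually_le_atBot (-1 - m)).mono fun y hy => by linarith).and
      ((hTt.eventually_ge_atTop 1).and (hLt.eventually_ge_atTop 1))
  obtain ⟨y₂, hy₂⟩ := eventually_atBot.mp hev
  -- divergence of the set integral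
  have hTmeas : Measurable fun y : ℝ => ENNReal.ofReal (T y ^ (1 + ε)) := by
    apply Measurable.ennreal_ofReal
    apply (Real.continuous_rpow_const (by linarith : (0:ℝ) ≤ 1 + ε)).measurable.comp
    simp only [hT_def]
    fun_prop
  have hgp : ∀ y : ℝ, gaussianPDF 0 1 y = ENNReal.ofReal (stdPDF y) := by
    intro y
    simp [gaussianPDF, gaussianPDFReal, stdPDF]
  have hH : ∫⁻ y in Set.Iic y₂, ENNReal.ofReal (T y ^ (1 + ε)) ∂γ = ⊤ := by
    rw [hγ_def, gaussianReal_of_var_ne_zero 0 one_ne_zero,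
      restrict_withDensity measurableSet_Iic,
      lintegral_withDensity_eq_lintegral_mul _ (measurable_gaussianPDF 0 1) hTmeas]
    refine top_unique ?_
    calc (⊤ : ENNReal) = volume (Set.Iic y₂) := (Real.volume_Iic).symm
      _ = ∫⁻ _ in Set.Iic y₂, 1 ∂volume := by rw [setLIntegral_one]
      _ ≤ ∫⁻ y in Set.Iic y₂,
            (gaussianPDF 0 1 * fun y => ENNReal.ofReal (T y ^ (1 + ε))) y ∂volume := by
          apply setLIntegral_mono ((measurable_gaussianPDF 0 1).mul hTmeas)
          intro y hy
          show (1 : ENNReal) ≤ gaussianPDF 0 1 y * ENNReal.ofReal (T y ^ (1 + ε))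
          rw [hgp y, ← ENNReal.ofReal_mul (stdPDF_pos y).le,
            show (1 : ENNReal) = ENNReal.ofReal 1 from ENNReal.ofReal_one.symm]
          apply ENNReal.ofReal_le_ofReal
          have h3 := (hy₂ y hy).2.2
          linarith [mul_comm (stdPDF y) (T y ^ (1 + ε))]
  have hGm' : Measurable (Function.uncurry G) := hGm
  -- main chain
  calc ∫⁻ ω, ENNReal.ofReal
        (|millsTau σ₂ (ξ₂ ω) * (ξ₁ ω - dd * ξ₂ ω) + dd| ^ (1 + ε)) ∂P
      = ∫⁻ ω, G (Z₂ ω) (Z₁ ω) ∂P := lintegral_congr hint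
    _ = ∫⁻ p : ℝ × ℝ, G p.1 p.2 ∂(P.map fun ω => (Z₂ ω, Z₁ ω)) :=
        (lintegral_map hGm (hm₂.prodMk hm₁)).symm
    _ = ∫⁻ p : ℝ × ℝ, G p.1 p.2 ∂(γ.prod γ) := by
        rw [(indepFun_iff_map_prod_eq_prod_map_map hm₂.aemeasurable hm₁.aemeasurable).mp
          hind.symm, hZ₂, hZ₁]
    _ = ∫⁻ y, ∫⁻ x, G y x ∂γ ∂γ := lintegral_prod _ hGm.aemeasurable
    _ = ⊤ := by
        refine top_unique ?_
        calc (⊤ : ENNReal) = (∫⁻ y in Set.Iic y₂, ENNReal.ofReal (T y ^ (1 + ε)) ∂γ) * γ A := by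
              rw [hH, ENNReal.top_mul hAne]
          _ = ∫⁻ y in Set.Iic y₂, ENNReal.ofReal (T y ^ (1 + ε)) * γ A ∂γ :=
              (lintegral_mul_const _ hTmeas).symm
          _ ≤ ∫⁻ y in Set.Iic y₂, (∫⁻ x, G y x ∂γ) ∂γ := by
              apply setLIntegral_mono hGm'.lintegral_prod_right
              intro y hy
              exact hinner y (hy₂ y hy).1 (hy₂ y hy).2.1
          _ ≤ ∫⁻ y, (∫⁻ x, G y x ∂γ) ∂γ := setLIntegral_le_lintegral _ _
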